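/- Let F = F_{3^n}, and let φ(x) = x^3 + a·x + b with a, b ∈ F and a ≠ 0. Then φ splits into three linear factors over F if and only if -a = c^2 for some c ∈ F and Tr(b/c^3) = 0, where Tr is the absolute trace from F to F_3. -/

import Mathlib

open Polynomial

section Aux
variable {F : Type*} [Field F] [Fintype F]

lemma aux_card_le (p : F[X]) (hp : p ≠ 0) (S : Set F) (hS : ∀ y ∈ S, p.eval y = 0) :
    Nat.card S ≤ p.natDegree := by
  classical
  have hsub : S ⊆ (↑p.roots.toFinset : Set F) := fun y hy => by
    rw [Finset.mem_coe, Multiset.mem_toFinset, mem_roots']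
    exact ⟨hp, hS y hy⟩
  calc Nat.card S = S.ncard := Nat.card_coe_set_eq S
    _ ≤ (↑p.roots.toFinset : Set F).ncard := Set.ncard_le_ncard hsub (Set.toFinite _)
    _ = p.roots.toFinset.card := Set.ncard_coe_finset _
    _ ≤ Multiset.card p.roots := Multiset.toFinset_card_le _
    _ ≤ p.natDegree := Polynomial.card_roots' p

lemma char3 (n : ℕ) (hn : 0 < n) (hF : Fintype.card F = 3 ^ n) : CharP F 3 := by
  have h0 : ((3:ℕ) : F) = 0 := by
    have := FiniteField.cast_card_eq_zero F
    rw [hF] at this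
    push_cast at this
    exact pow_eq_zero_iff hn.ne' |>.mp this
  have hd : ringChar F ∣ 3 := ringChar.dvd h0
  have h1 : ringChar F ≠ 1 := by
    intro h
    have : ((1:ℕ) : F) = 0 := CharP.cast_eq_zero_iff F (ringChar F) 1 |>.mpr (by rw [h])
    simp at this
  have : ringChar F = 3 := by
    rcases Nat.prime_three.eq_one_or_self_of_dvd _ hd with h | h
    · exact absurd h h1
    · exact h
  exact this ▸ ringChar.charP F

noncomputable def Thom (F : Type*) [Field F] [CharP F 3] (n : ℕ) : F →+ F where
  toFun y := ∑ i ∈ Finset.range n, y ^ 3 ^ i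
  map_zero' := by
    simp [zero_pow (pow_ne_zero _ (by norm_num : (3:ℕ) ≠ 0))]
  map_add' x y := by
    haveI : Fact (Nat.Prime 3) := ⟨Nat.prime_three⟩
    simp [add_pow_char_pow, Finset.sum_add_distrib]

lemma Thom_apply {F : Type*} [Field F] [CharP F 3] (n : ℕ) (x : F) :
    Thom F n x = ∑ i ∈ Finset.range n, x ^ 3 ^ i := rfl

noncomputable def psiAS (F : Type*) [Field F] [CharP F 3] : F →+ F where
  toFun y := y ^ 3 - y
  map_zero' := by simp
  map_add' x y := by
    haveI : Fact (Nat.Prime 3) := ⟨Nat.prime_three⟩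
    show (x + y) ^ 3 - (x + y) = (x ^ 3 - x) + (y ^ 3 - y)
    rw [add_pow_char]
    ring

lemma Thom_cube [CharP F 3] (n : ℕ) (hF : Fintype.card F = 3 ^ n) (y : F) :
    Thom F n (y ^ 3) = Thom F n y := by
  have hy : y ^ 3 ^ n = y := by
    have := FiniteField.pow_card y
    rwa [hF] at this
  have h1 : ∀ i : ℕ, (y ^ 3) ^ 3 ^ i = y ^ 3 ^ (i + 1) := by
    intro i
    rw [← pow_mul]
    congr 1
    rw [pow_succ]
    ring
  show (∑ i ∈ Finset.range n, (y ^ 3) ^ 3 ^ i) = ∑ i ∈ Finset.range n, y ^ 3 ^ i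
  simp_rw [h1]
  have e1 := Finset.sum_range_succ' (fun i => y ^ 3 ^ i) n
  have e2 := Finset.sum_range_succ (fun i => y ^ 3 ^ i) n
  simp only [pow_zero, pow_one] at e1 e2
  rw [hy] at e2
  linear_combination e2 - e1

lemma lemB [CharP F 3] (n : ℕ) (hn : 0 < n) (hF : Fintype.card F = 3 ^ n) (t : F)
    (ht : Thom F n t = 0) : ∃ y : F, y ^ 3 - y = t := by
  classical
  set ψ := psiAS F with hψ
  have hgne : (X ^ 3 - X : F[X]) ≠ 0 := by
    intro h
    have := congrArg (fun p => coeff p 3) h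
    simp [coeff_X] at this
  have hdeg : (X ^ 3 - X : F[X]).natDegree = 3 := by
    compute_degree!
  have hker : Nat.card (↑ψ.ker : Set F) ≤ 3 := by
    have := aux_card_le (X ^ 3 - X : F[X]) hgne (↑ψ.ker) ?_
    · rwa [hdeg] at this
    · intro y hy
      have : y ^ 3 - y = 0 := hy
      simp [this]
  have hquot : Nat.card F = Nat.card (F ⧸ ψ.ker) * Nat.card ψ.ker :=
    AddSubgroup.card_eq_card_quotient_mul_card_addSubgroup _
  have hrange : Nat.card (F ⧸ ψ.ker) = Nat.card ψ.range :=
    Nat.card_congr (QuotientAddGroup.quotientKerEquivRange ψ).toEquiv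
  have h3n : Nat.card ψ.range * Nat.card ψ.ker = 3 ^ n := by
    rw [← hrange, ← hquot, Nat.card_eq_fintype_card, hF]
  have hker' : Nat.card ψ.ker ≤ 3 := hker
  have hr_ge : 3 ^ (n - 1) ≤ Nat.card ψ.range := by
    have h1 : 3 ^ n ≤ Nat.card ψ.range * 3 := by
      calc 3 ^ n = Nat.card ψ.range * Nat.card ψ.ker := h3n.symm
        _ ≤ Nat.card ψ.range * 3 := Nat.mul_le_mul_left _ hker'
    have h2 : 3 ^ (n - 1) * 3 ≤ Nat.card ψ.range * 3 := by
      have hn1 : 3 ^ (n - 1) * 3 = 3 ^ n := by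
        rw [← pow_succ, Nat.sub_add_cancel hn]
      rw [hn1]
      exact h1
    exact Nat.le_of_mul_le_mul_right h2 (by norm_num)
  set S : Set F := {x : F | Thom F n x = 0} with hS
  have hTne : (∑ i ∈ Finset.range n, (X : F[X]) ^ 3 ^ i) ≠ 0 := by
    intro h
    have := congrArg (fun p => coeff p 1) h
    simp only [finset_sum_coeff, coeff_X_pow, coeff_zero] at this
    rw [Finset.sum_eq_single 0] at this
    · simp at this
    · intro i _ hi
      have : (3:ℕ) ^ i ≠ 1 := (Nat.one_lt_pow hi (by norm_num)).ne'
      simp [Ne.symm this]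
    · intro h0
      exact absurd (Finset.mem_range.mpr hn) h0
  have hSle : Nat.card S ≤ 3 ^ (n - 1) := by
    have hd : (∑ i ∈ Finset.range n, (X : F[X]) ^ 3 ^ i).natDegree ≤ 3 ^ (n - 1) := by
      apply natDegree_sum_le_of_forall_le
      intro i hi
      rw [natDegree_X_pow]
      exact Nat.pow_le_pow_right (by norm_num) (by
        have := Finset.mem_range.mp hi; omega)
    have := aux_card_le _ hTne S ?_
    · exact this.trans hd
    · intro y hy
      have hy' : Thom F n y = 0 := hy
      simpa [eval_finset_sum, Thom_apply] using hy'
  have hsub : (↑ψ.range : Set F) ⊆ S := by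
    rintro x ⟨y, rfl⟩
    show Thom F n (y ^ 3 - y) = 0
    rw [map_sub, Thom_cube n hF, sub_self]
  have hScard : S.ncard ≤ (↑ψ.range : Set F).ncard := by
    rw [← Nat.card_coe_set_eq, ← Nat.card_coe_set_eq]
    calc Nat.card S ≤ 3 ^ (n-1) := hSle
      _ ≤ Nat.card ψ.range := hr_ge
      _ = Nat.card (↑ψ.range : Set F) := rfl
  have heq : (↑ψ.range : Set F) = S := Set.eq_of_subset_of_ncard_le hsub hScard (Set.toFinite _)
  have htS : t ∈ S := ht
  rw [← heq] at htS
  obtain ⟨y, hy⟩ := htS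
  exact ⟨y, hy⟩

lemma expand3 (r s u : F) : ((X : F[X]) - C r) * (X - C s) * (X - C u) =
    X ^ 3 - C (r + s + u) * X ^ 2 + C (r * s + r * u + s * u) * X - C (r * s * u) := by
  simp only [map_add, map_mul]
  ring

end Aux

open Polynomial in
theorem stmt_8 (n : ℕ) (hn : 0 < n)
    (F : Type*) [Field F] [Fintype F] (hF : Fintype.card F = 3 ^ n)
    (a b : F) (ha : a ≠ 0) :
    ((X ^ 3 + C a * X + C b : F[X]).map (RingHom.id F)).Splits ↔
      ∃ c : F, -a = c ^ 2 ∧ ∑ i ∈ Finset.range n, (b / c ^ 3) ^ 3 ^ i = 0 := by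
  haveI := char3 n hn hF
  have h3 : (3 : F) = 0 := by
    have := CharP.cast_eq_zero F 3; exact_mod_cast this
  constructor
  · intro hsp
    rw [Polynomial.map_id] at hsp
    have hm : (X ^ 3 + C a * X + C b : F[X]).Monic := by monicity!
    have hdeg : (X ^ 3 + C a * X + C b : F[X]).natDegree = 3 := by compute_degree!
    have hroots : Multiset.card (X ^ 3 + C a * X + C b : F[X]).roots = 3 := by
      rw [(splits_iff_card_roots).mp hsp, hdeg]
    obtain ⟨r, s, u, hrsu⟩ := Multiset.card_eq_three.mp hroots
    have hfac := hsp.eq_prod_roots_of_monic hm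
    rw [hrsu] at hfac
    simp only [Multiset.insert_eq_cons, Multiset.map_cons, Multiset.map_singleton,
      Multiset.prod_cons, Multiset.prod_singleton] at hfac
    rw [← mul_assoc, expand3] at hfac
    have h2 := congrArg (fun p => coeff p 2) hfac
    have h1c := congrArg (fun p => coeff p 1) hfac
    have h0c := congrArg (fun p => coeff p 0) hfac
    simp only [coeff_add, coeff_sub, coeff_C_mul, coeff_X_pow, coeff_X, coeff_C] at h2 h1c h0c
    norm_num at h2 h1c h0c
    -- h2 : 0 = -u + (-s + -r), h1c : a = r*s + r*u + s*u, h0c : b = -(r*s*u)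
    obtain ⟨c, hcdef⟩ : ∃ c : F, c = r - s := ⟨_, rfl⟩
    have hcsq : -a = c ^ 2 := by
      rw [hcdef]
      linear_combination (-1) * h1c - (r + s) * h2 + (r * s) * h3
    refine ⟨c, hcsq, ?_⟩
    have hcne : c ≠ 0 := by
      intro h
      rw [h] at hcsq
      exact ha (by simpa using hcsq)
    have hrmem : r ∈ (X ^ 3 + C a * X + C b : F[X]).roots := by
      rw [hrsu]; simp
    have hr0 : r ^ 3 + a * r + b = 0 := by
      have := isRoot_of_mem_roots hrmem
      simpa using this
    have hnum : r ^ 3 - r * c ^ 2 = -b := by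
      linear_combination hr0 + r * hcsq
    have hy : (r / c) ^ 3 - r / c = -(b / c ^ 3) := by
      have hfrac : (r / c) ^ 3 - r / c = (r ^ 3 - r * c ^ 2) / c ^ 3 := by
        field_simp
      rw [hfrac, hnum, neg_div]
    have hT1 : Thom F n (-(b / c ^ 3)) = 0 := by
      rw [← hy, map_sub, Thom_cube n hF, sub_self]
    rw [map_neg, neg_eq_zero] at hT1
    rw [← Thom_apply]
    exact hT1
  · rintro ⟨c, hc, htr⟩
    have hcne : c ≠ 0 := by
      intro h
      rw [h] at hc
      exact ha (by simpa using hc)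
    have htr' : Thom F n (-(b / c ^ 3)) = 0 := by
      rw [map_neg, Thom_apply, htr, neg_zero]
    obtain ⟨y, hy⟩ := lemB n hn hF _ htr'
    have hy2 : c ^ 3 * y ^ 3 - c ^ 3 * y = -b := by
      have h := congrArg (fun z => c ^ 3 * z) hy
      simp only [mul_sub] at h
      rw [h]
      field_simp
    have key : (X ^ 3 + C a * X + C b : F[X]) =
        (X - C (c * y)) * (X - C (c * y + c)) * (X - C (c * y - c)) := by
      rw [expand3]
      have e1 : c * y + (c * y + c) + (c * y - c) = 0 := by
        linear_combination (c * y) * h3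
      have e2 : c * y * (c * y + c) + c * y * (c * y - c) + (c * y + c) * (c * y - c) = a := by
        linear_combination (c ^ 2 * y ^ 2) * h3 + hc
      have e3 : c * y * (c * y + c) * (c * y - c) = -b := by
        linear_combination hy2
      rw [e1, e2, e3]
      simp only [map_zero, zero_mul, sub_zero, map_neg, sub_neg_eq_add]
    rw [Polynomial.map_id, key]
    exact Splits.mul (Splits.mul (Splits.X_sub_C _) (Splits.X_sub_C _)) (Splits.X_sub_C _)
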